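/- arXiv:2203.05165 — 2 statements merged into one kernel-verified Lean document; each statement's English description precedes it below -/
import Mathlib

section
/- Let α ∈ (0,1) and let p, q ≥ 1 and r ∈ [1, 1/(1−α)) satisfy 1/q + 1 = 1/p + 1/r. Then for any real numbers a < b, any τ ∈ (0, b−a], and any ψ ∈ Lᵖ([a,b];ℝ), one has (∫_a^{a+τ} |∫_a^t ψ(s)(t−s)^{α−1} ds|^q dt)^{1/q} ≤ (τ^{1−r(1−α)}/(1−r(1−α)))^{1/r} ‖ψ‖_{Lᵖ([a,b];ℝ)}, and (∫_a^{a+τ} |∫_a^t ψ(s) ds|^q dt)^{1/q} ≤ τ^{1/r} ‖ψ‖_{Lᵖ([a,b];ℝ)}. -/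
open MeasureTheory Set
open scoped ENNReal

noncomputable section

lemma lint_sub_left (h : ℝ → ℝ≥0∞) (a t : ℝ) :
    ∫⁻ s in Set.Ioc a t, h (t - s) = ∫⁻ u in Set.Ico 0 (t - a), h u := by
  have hmp : MeasurePreserving (fun s : ℝ => t - s) volume volume :=
    Measure.measurePreserving_sub_left volume t
  have hemb : MeasurableEmbedding (fun s : ℝ => t - s) := by
    have : (fun s : ℝ => t - s) = (Homeomorph.addLeft t) ∘ (Homeomorph.neg ℝ) := by
      funext s; simp [sub_eq_add_neg]
    rw [this]
    exact ((Homeomorph.neg ℝ).trans (Homeomorph.addLeft t)).measurableEmbedding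
  have hset : (fun s : ℝ => t - s) ⁻¹' (Set.Ico 0 (t - a)) = Set.Ioc a t := by
    ext s
    simp only [Set.mem_preimage, Set.mem_Ico, Set.mem_Ioc, sub_nonneg, sub_lt_sub_iff_left]
    exact ⟨fun hs => ⟨hs.2, hs.1⟩, fun hs => ⟨hs.2, hs.1⟩⟩
  have := hmp.setLIntegral_comp_preimage_emb hemb h (Set.Ico 0 (t - a))
  rw [hset] at this
  exact this

lemma lint_sub_right (h : ℝ → ℝ≥0∞) (s c d : ℝ) :
    ∫⁻ t in Set.Ioc c d, h (t - s) = ∫⁻ u in Set.Ioc (c - s) (d - s), h u := by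
  have hmp : MeasurePreserving (fun t : ℝ => t - s) volume volume :=
    measurePreserving_sub_right volume s
  have hemb : MeasurableEmbedding (fun t : ℝ => t - s) :=
    (Homeomorph.subRight s).measurableEmbedding
  have hset : (fun t : ℝ => t - s) ⁻¹' (Set.Ioc (c - s) (d - s)) = Set.Ioc c d := by
    ext u
    simp only [Set.mem_preimage, Set.mem_Ioc, sub_le_sub_iff_right, sub_lt_sub_iff_right]
  have := hmp.setLIntegral_comp_preimage_emb hemb h (Set.Ioc (c - s) (d - s))
  rw [hset] at this
  exact this

lemma young_master (p q r a τ : ℝ) (hp : 1 ≤ p) (hq : 1 ≤ q) (hr : 1 ≤ r)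
    (hpqr : 1 / q + 1 = 1 / p + 1 / r) (hτ : 0 < τ)
    (F K : ℝ → ℝ≥0∞) (hF : Measurable F) (hK : Measurable K)
    (A B : ℝ≥0∞) (hA' : A ≠ ⊤) (hB' : B ≠ ⊤)
    (hA : ∫⁻ s in Set.Ioc a (a + τ), F s ^ p ≤ A)
    (hB : ∫⁻ u in Set.Ioo 0 τ, K u ^ r ≤ B) :
    ∫⁻ t in Set.Ioc a (a + τ), (∫⁻ s in Set.Ioc a t, F s * K (t - s)) ^ q
      ≤ A ^ (q / p) * B ^ (q / r) := by
  have hp0 : 0 < p := lt_of_lt_of_le one_pos hp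
  have hq0 : 0 < q := lt_of_lt_of_le one_pos hq
  have hr0 : 0 < r := lt_of_lt_of_le one_pos hr
  have hw2 : (0:ℝ) ≤ 1 / p - 1 / q := by
    have h1 : 1 / r ≤ 1 := by rw [div_le_one hr0]; exact hr
    linarith
  have hw3 : (0:ℝ) ≤ 1 / r - 1 / q := by
    have h1 : 1 / p ≤ 1 := by rw [div_le_one hp0]; exact hp
    linarith
  have hpq : p ≤ q := by
    have h1 : 1 / q ≤ 1 / p := by linarith
    rw [div_le_div_iff₀ hq0 hp0] at h1
    linarith
  have hrq : r ≤ q := by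
    have h1 : 1 / q ≤ 1 / r := by linarith
    rw [div_le_div_iff₀ hq0 hr0] at h1
    linarith
  have hqp1 : (0:ℝ) ≤ q / p - 1 := by
    have := (one_le_div hp0).mpr hpq
    linarith
  have hqr1 : (0:ℝ) ≤ q / r - 1 := by
    have := (one_le_div hr0).mpr hrq
    linarith
  set C : ℝ≥0∞ := A ^ (q / p - 1) * B ^ (q / r - 1) with hC
  set S : Set (ℝ × ℝ) := {z : ℝ × ℝ | a < z.2 ∧ z.2 ≤ z.1} with hS
  have hSmeas : MeasurableSet S := by
    apply MeasurableSet.inter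
    · exact measurableSet_lt measurable_const measurable_snd
    · exact measurableSet_le measurable_snd measurable_fst
  set g : ℝ × ℝ → ℝ≥0∞ :=
    fun z => S.indicator (fun z => F z.2 ^ p * K (z.1 - z.2) ^ r) z with hg
  have hgmeas : Measurable g := by
    apply Measurable.indicator _ hSmeas
    exact ((hF.comp measurable_snd).pow_const p).mul
      ((hK.comp (measurable_fst.sub measurable_snd)).pow_const r)
  have hg_mem : ∀ t s : ℝ, (t, s) ∈ S → g (t, s) = F s ^ p * K (t - s) ^ r := by
    intro t s hz
    exact Set.indicator_of_mem hz _
  have hg_nmem : ∀ t s : ℝ, (t, s) ∉ S → g (t, s) = 0 := by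
    intro t s hz
    exact Set.indicator_of_notMem hz _
  have hinner : ∀ t : ℝ, ∫⁻ s in Set.Ioc a t, F s ^ p * K (t - s) ^ r
      = ∫⁻ s, g (t, s) := by
    intro t
    rw [← lintegral_indicator measurableSet_Ioc]
    apply lintegral_congr
    intro s
    by_cases hs : s ∈ Set.Ioc a t
    · rw [Set.indicator_of_mem hs, hg_mem t s ⟨hs.1, hs.2⟩]
    · rw [Set.indicator_of_notMem hs, hg_nmem t s fun hz => hs ⟨hz.1, hz.2⟩]
  -- pointwise Hölder bound
  have key : ∀ t ∈ Set.Ioc a (a + τ),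
      (∫⁻ s in Set.Ioc a t, F s * K (t - s)) ^ q
        ≤ (∫⁻ s in Set.Ioc a t, F s ^ p * K (t - s) ^ r) * C := by
    intro t ht
    have hmem : Set.Ioc a t ⊆ Set.Ioc a (a + τ) := Set.Ioc_subset_Ioc_right ht.2
    set f : Fin 3 → ℝ → ℝ≥0∞ :=
      ![fun s => F s ^ p * K (t - s) ^ r, fun s => F s ^ p, fun s => K (t - s) ^ r] with hf
    set w : Fin 3 → ℝ := ![1 / q, 1 / p - 1 / q, 1 / r - 1 / q] with hw
    have hsum : ∑ i : Fin 3, w i = 1 := by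
      rw [Fin.sum_univ_three]
      show 1 / q + (1 / p - 1 / q) + (1 / r - 1 / q) = 1
      linarith
    have hnn : ∀ i ∈ Finset.univ, 0 ≤ w i := by
      intro i _
      fin_cases i
      · show (0:ℝ) ≤ 1 / q; positivity
      · exact hw2
      · exact hw3
    have hfm : ∀ i ∈ Finset.univ,
        AEMeasurable (f i) (volume.restrict (Set.Ioc a t)) := by
      intro i _
      fin_cases i
      · exact ((hF.pow_const p).mul
          ((hK.comp (measurable_const.sub measurable_id)).pow_const r)).aemeasurable
      · exact (hF.pow_const p).aemeasurable
      · exact ((hK.comp (measurable_const.sub measurable_id)).pow_const r).aemeasurable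
    have hpt : ∀ s : ℝ, F s * K (t - s) = ∏ i : Fin 3, f i s ^ w i := by
      intro s
      have e1 : p * (1 / q) + p * (1 / p - 1 / q) = 1 := by field_simp; ring
      have e2 : r * (1 / q) + r * (1 / r - 1 / q) = 1 := by field_simp; ring
      have h1 : (0:ℝ) ≤ p * (1 / q) := by positivity
      have h2 : (0:ℝ) ≤ p * (1 / p - 1 / q) := mul_nonneg hp0.le hw2
      have h3 : (0:ℝ) ≤ r * (1 / q) := by positivity
      have h4 : (0:ℝ) ≤ r * (1 / r - 1 / q) := mul_nonneg hr0.le hw3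
      have expand : ∏ i : Fin 3, f i s ^ w i
          = (F s ^ p * K (t - s) ^ r) ^ (1 / q) * (F s ^ p) ^ (1 / p - 1 / q)
            * (K (t - s) ^ r) ^ (1 / r - 1 / q) := by
        rw [Fin.prod_univ_three]
        rfl
      rw [expand, ENNReal.mul_rpow_of_nonneg _ _ (by positivity : (0:ℝ) ≤ 1/q)]
      rw [← ENNReal.rpow_mul (F s) p (1/q), ← ENNReal.rpow_mul (K (t-s)) r (1/q),
        ← ENNReal.rpow_mul (F s) p (1/p - 1/q), ← ENNReal.rpow_mul (K (t-s)) r (1/r - 1/q)]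
      calc F s * K (t - s)
          = (F s ^ (p * (1/q)) * F s ^ (p * (1/p - 1/q)))
            * (K (t-s) ^ (r * (1/q)) * K (t-s) ^ (r * (1/r - 1/q))) := by
            rw [← ENNReal.rpow_add_of_nonneg _ _ h1 h2,
              ← ENNReal.rpow_add_of_nonneg _ _ h3 h4, e1, e2,
              ENNReal.rpow_one, ENNReal.rpow_one]
        _ = F s ^ (p * (1/q)) * K (t-s) ^ (r * (1/q)) * F s ^ (p * (1/p - 1/q))
            * K (t-s) ^ (r * (1/r - 1/q)) := by ring
    have holder := ENNReal.lintegral_prod_norm_pow_le (μ := volume.restrict (Set.Ioc a t))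
      Finset.univ hfm hsum hnn
    have lhs_eq : ∫⁻ s in Set.Ioc a t, F s * K (t - s)
        = ∫⁻ s in Set.Ioc a t, ∏ i : Fin 3, f i s ^ w i :=
      lintegral_congr fun s => hpt s
    have hA2 : ∫⁻ s in Set.Ioc a t, F s ^ p ≤ A :=
      le_trans (lintegral_mono_set hmem) hA
    have hB3 : ∫⁻ s in Set.Ioc a t, K (t - s) ^ r ≤ B := by
      have h1 : ∫⁻ s in Set.Ioc a t, K (t - s) ^ r
          = ∫⁻ u in Set.Ico 0 (t - a), K u ^ r :=
        lint_sub_left (fun u => K u ^ r) a t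
      have h2 : ∫⁻ u in Set.Ico 0 (t - a), K u ^ r
          = ∫⁻ u in Set.Ioo 0 (t - a), K u ^ r :=
        (setLIntegral_congr Ioo_ae_eq_Ico).symm
      have h3 : ∫⁻ u in Set.Ioo 0 (t - a), K u ^ r ≤ ∫⁻ u in Set.Ioo 0 τ, K u ^ r :=
        lintegral_mono_set (Set.Ioo_subset_Ioo_right (by linarith [ht.2]))
      rw [h1, h2]
      exact le_trans h3 hB
    have prod_eq : ∏ i : Fin 3, (∫⁻ s in Set.Ioc a t, f i s) ^ w i
        = (∫⁻ s in Set.Ioc a t, F s ^ p * K (t - s) ^ r) ^ (1/q)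
          * (∫⁻ s in Set.Ioc a t, F s ^ p) ^ (1/p - 1/q)
          * (∫⁻ s in Set.Ioc a t, K (t - s) ^ r) ^ (1/r - 1/q) := by
      rw [Fin.prod_univ_three]
      rfl
    have step1 : ∫⁻ s in Set.Ioc a t, F s * K (t - s)
        ≤ (∫⁻ s in Set.Ioc a t, F s ^ p * K (t - s) ^ r) ^ (1/q)
          * A ^ (1/p - 1/q) * B ^ (1/r - 1/q) := by
      rw [lhs_eq]
      refine le_trans holder ?_
      rw [prod_eq]
      exact mul_le_mul' (mul_le_mul' le_rfl (ENNReal.rpow_le_rpow hA2 hw2))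
        (ENNReal.rpow_le_rpow hB3 hw3)
    calc (∫⁻ s in Set.Ioc a t, F s * K (t - s)) ^ q
        ≤ ((∫⁻ s in Set.Ioc a t, F s ^ p * K (t - s) ^ r) ^ (1/q)
            * A ^ (1/p - 1/q) * B ^ (1/r - 1/q)) ^ q :=
          ENNReal.rpow_le_rpow step1 (le_of_lt hq0)
      _ = (∫⁻ s in Set.Ioc a t, F s ^ p * K (t - s) ^ r) * C := by
          rw [ENNReal.mul_rpow_of_nonneg _ _ (le_of_lt hq0),
            ENNReal.mul_rpow_of_nonneg _ _ (le_of_lt hq0)]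
          rw [← ENNReal.rpow_mul, ← ENNReal.rpow_mul, ← ENNReal.rpow_mul]
          have eq1 : 1 / q * q = 1 := by field_simp
          have eq2 : (1 / p - 1 / q) * q = q / p - 1 := by field_simp
          have eq3 : (1 / r - 1 / q) * q = q / r - 1 := by field_simp
          rw [eq1, eq2, eq3, ENNReal.rpow_one, hC, mul_assoc]
  -- Fubini bound
  have fub : ∫⁻ t in Set.Ioc a (a + τ), ∫⁻ s in Set.Ioc a t, F s ^ p * K (t - s) ^ r
      ≤ A * B := by
    have swap : ∫⁻ t in Set.Ioc a (a + τ), ∫⁻ s in Set.Ioc a t, F s ^ p * K (t - s) ^ r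
        = ∫⁻ s, ∫⁻ t in Set.Ioc a (a + τ), g (t, s) := by
      have e : ∫⁻ t in Set.Ioc a (a + τ), ∫⁻ s in Set.Ioc a t, F s ^ p * K (t - s) ^ r
          = ∫⁻ t in Set.Ioc a (a + τ), ∫⁻ s, g (t, s) :=
        lintegral_congr fun t => hinner t
      rw [e]
      exact lintegral_lintegral_swap hgmeas.aemeasurable
    rw [swap]
    have bound_s : ∀ s : ℝ, ∫⁻ t in Set.Ioc a (a + τ), g (t, s)
        ≤ (Set.Ioc a (a + τ)).indicator (fun s => F s ^ p) s * B := by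
      intro s
      by_cases hs : s ∈ Set.Ioc a (a + τ)
      · rw [Set.indicator_of_mem hs]
        have hb1 : ∫⁻ t in Set.Ioc a (a + τ), g (t, s)
            ≤ ∫⁻ t in Set.Ioc a (a + τ),
                F s ^ p * (Set.Ioi 0).indicator (fun u => K u ^ r) (t - s) := by
          apply setLIntegral_mono_ae
          · exact (measurable_const.mul
              (((hK.pow_const r).indicator measurableSet_Ioi).comp
                (measurable_id.sub measurable_const))).aemeasurable
          · filter_upwards [compl_mem_ae_iff.mpr (measure_singleton s)] with t hts htmem
            by_cases hzS : (t, s) ∈ S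
            · have hne : t ≠ s := fun h => hts (by simp [h])
              have h1 : s < t := lt_of_le_of_ne hzS.2 (Ne.symm hne)
              rw [hg_mem t s hzS,
                Set.indicator_of_mem (by simpa using sub_pos.mpr h1 : t - s ∈ Set.Ioi (0:ℝ))]
            · rw [hg_nmem t s hzS]
              exact zero_le
        refine le_trans hb1 ?_
        rw [lintegral_const_mul]
        swap
        · exact ((hK.pow_const r).indicator measurableSet_Ioi).comp
            (measurable_id.sub measurable_const)
        refine mul_le_mul' le_rfl ?_
        have h2 : ∫⁻ t in Set.Ioc a (a + τ), (Set.Ioi 0).indicator (fun u => K u ^ r) (t - s)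
            = ∫⁻ u in Set.Ioc (a - s) (a + τ - s),
                (Set.Ioi 0).indicator (fun u => K u ^ r) u :=
          lint_sub_right _ s a (a + τ)
        rw [h2, lintegral_indicator measurableSet_Ioi,
          Measure.restrict_restrict measurableSet_Ioi]
        refine le_trans (lintegral_mono_set ?_) hB
        intro u hu
        have hu0 : (0:ℝ) < u := hu.1
        have hu2 : u ≤ a + τ - s := hu.2.2
        have := hs.1
        exact ⟨hu0, by linarith⟩
      · rw [Set.indicator_of_notMem hs, zero_mul]
        have hzero : ∀ t ∈ Set.Ioc a (a + τ), g (t, s) = 0 := by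
          intro t ht
          exact hg_nmem t s (fun hzS => hs ⟨hzS.1, le_trans hzS.2 ht.2⟩)
        rw [setLIntegral_congr_fun measurableSet_Ioc hzero]
        simp
    calc ∫⁻ s, ∫⁻ t in Set.Ioc a (a + τ), g (t, s)
        ≤ ∫⁻ s, (Set.Ioc a (a + τ)).indicator (fun s => F s ^ p) s * B :=
          lintegral_mono bound_s
      _ = (∫⁻ s, (Set.Ioc a (a + τ)).indicator (fun s => F s ^ p) s) * B :=
          lintegral_mul_const' B _ hB'
      _ = (∫⁻ s in Set.Ioc a (a + τ), F s ^ p) * B := by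
          rw [lintegral_indicator measurableSet_Ioc]
      _ ≤ A * B := mul_le_mul' hA le_rfl
  have hinner_meas : Measurable fun t => ∫⁻ s in Set.Ioc a t, F s ^ p * K (t - s) ^ r := by
    have e : (fun t => ∫⁻ s in Set.Ioc a t, F s ^ p * K (t - s) ^ r)
        = fun t => ∫⁻ s, g (t, s) := funext fun t => hinner t
    rw [e]
    exact hgmeas.lintegral_prod_right'
  have hCfin : C ≠ ⊤ := by
    rw [hC]
    exact ENNReal.mul_ne_top (ENNReal.rpow_ne_top_of_nonneg hqp1 hA')
      (ENNReal.rpow_ne_top_of_nonneg hqr1 hB')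
  have hxc : ∀ (x : ℝ≥0∞) (c : ℝ), 0 ≤ c - 1 → x * x ^ (c - 1) = x ^ c := by
    intro x c hc
    nth_rewrite 1 [← ENNReal.rpow_one x]
    rw [← ENNReal.rpow_add_of_nonneg _ _ zero_le_one hc]
    norm_num
  calc ∫⁻ t in Set.Ioc a (a + τ), (∫⁻ s in Set.Ioc a t, F s * K (t - s)) ^ q
      ≤ ∫⁻ t in Set.Ioc a (a + τ),
          (∫⁻ s in Set.Ioc a t, F s ^ p * K (t - s) ^ r) * C := by
        apply setLIntegral_mono_ae (hinner_meas.mul_const C).aemeasurable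
        exact ae_of_all _ key
    _ = (∫⁻ t in Set.Ioc a (a + τ), ∫⁻ s in Set.Ioc a t, F s ^ p * K (t - s) ^ r) * C :=
        lintegral_mul_const' C _ hCfin
    _ ≤ (A * B) * C := mul_le_mul' fub le_rfl
    _ = A ^ (q / p) * B ^ (q / r) := by
        rw [hC, mul_mul_mul_comm, hxc A (q/p) hqp1, hxc B (q/r) hqr1]

lemma young_real (p q r a b τ : ℝ)
    (hp : 1 ≤ p) (hq : 1 ≤ q) (hr : 1 ≤ r)
    (hpqr : 1 / q + 1 = 1 / p + 1 / r)
    (hτ0 : 0 < τ) (hτb : a + τ ≤ b)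
    (ψ : ℝ → ℝ) (hψ_meas : Measurable ψ)
    (hψ_Lp : IntegrableOn (fun s => |ψ s| ^ p) (Set.Ioc a b))
    (k : ℝ → ℝ) (hk_meas : Measurable k) (hk_nonneg : ∀ u, 0 ≤ u → 0 ≤ k u)
    (C : ℝ) (hC0 : 0 ≤ C)
    (hCk : ∫⁻ u in Set.Ioo 0 τ, ENNReal.ofReal (k u) ^ r ≤ ENNReal.ofReal C) :
    (∫ t in Set.Ioc a (a + τ), |∫ s in Set.Ioc a t, ψ s * k (t - s)| ^ q) ^ (1 / q)
      ≤ C ^ (1 / r) * (∫ s in Set.Ioc a b, |ψ s| ^ p) ^ (1 / p) := by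
  have hp0 : 0 < p := lt_of_lt_of_le one_pos hp
  have hq0 : 0 < q := lt_of_lt_of_le one_pos hq
  have hr0 : 0 < r := lt_of_lt_of_le one_pos hr
  set F : ℝ → ℝ≥0∞ := fun s => ENNReal.ofReal |ψ s| with hFdef
  set K : ℝ → ℝ≥0∞ := fun u => ENNReal.ofReal (k u) with hKdef
  have hFmeas : Measurable F := hψ_meas.abs.ennreal_ofReal
  have hKmeas : Measurable K := hk_meas.ennreal_ofReal
  set A : ℝ≥0∞ := ∫⁻ s in Set.Ioc a b, F s ^ p with hAdef
  have hInt_nonneg : 0 ≤ ∫ s in Set.Ioc a b, |ψ s| ^ p :=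
    integral_nonneg fun s => by positivity
  have hAeq : A = ENNReal.ofReal (∫ s in Set.Ioc a b, |ψ s| ^ p) := by
    rw [hAdef, ofReal_integral_eq_lintegral_ofReal hψ_Lp
      (ae_of_all _ fun s => by positivity)]
    apply lintegral_congr
    intro s
    exact ENNReal.ofReal_rpow_of_nonneg (abs_nonneg _) hp0.le
  have hA' : A ≠ ⊤ := by rw [hAeq]; exact ENNReal.ofReal_ne_top
  have hAbound : ∫⁻ s in Set.Ioc a (a + τ), F s ^ p ≤ A :=
    lintegral_mono_set (Set.Ioc_subset_Ioc_right hτb)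
  have master := young_master p q r a τ hp hq hr hpqr hτ0 F K hFmeas hKmeas
    A (ENNReal.ofReal C) hA' ENNReal.ofReal_ne_top hAbound hCk
  set I : ℝ → ℝ := fun t => ∫ s in Set.Ioc a t, ψ s * k (t - s) with hIdef
  -- pointwise bound
  have hpt : ∀ t : ℝ, ENNReal.ofReal (|I t| ^ q)
      ≤ (∫⁻ s in Set.Ioc a t, F s * K (t - s)) ^ q := by
    intro t
    have e1 : ENNReal.ofReal (|I t| ^ q) = ENNReal.ofReal |I t| ^ q :=
      (ENNReal.ofReal_rpow_of_nonneg (abs_nonneg _) hq0.le).symm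
    have e2 : ENNReal.ofReal |I t| = (‖I t‖₊ : ℝ≥0∞) :=
      (Real.enorm_eq_ofReal_abs _).symm
    have e3 : (‖I t‖₊ : ℝ≥0∞) ≤ ∫⁻ s in Set.Ioc a t, ‖ψ s * k (t - s)‖₊ :=
      enorm_integral_le_lintegral_enorm _
    have e4 : ∫⁻ s in Set.Ioc a t, (‖ψ s * k (t - s)‖₊ : ℝ≥0∞)
        = ∫⁻ s in Set.Ioc a t, F s * K (t - s) := by
      apply setLIntegral_congr_fun measurableSet_Ioc
      intro s hs
      beta_reduce
      rw [nnnorm_mul, ENNReal.coe_mul, ← enorm_eq_nnnorm, Real.enorm_eq_ofReal_abs,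
        ← enorm_eq_nnnorm, Real.enorm_eq_ofReal (hk_nonneg _ (by linarith [hs.2] : (0:ℝ) ≤ t - s))]
    rw [e1, e2]
    exact ENNReal.rpow_le_rpow (e4 ▸ e3) hq0.le
  -- measurability of I
  have hImeas : Measurable I := by
    set S : Set (ℝ × ℝ) := {z : ℝ × ℝ | a < z.2 ∧ z.2 ≤ z.1} with hS
    have hSmeas : MeasurableSet S := by
      apply MeasurableSet.inter
      · exact measurableSet_lt measurable_const measurable_snd
      · exact measurableSet_le measurable_snd measurable_fst
    set G : ℝ × ℝ → ℝ := fun z => S.indicator (fun z => ψ z.2 * k (z.1 - z.2)) z with hG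
    have hGmeas : Measurable G := by
      apply Measurable.indicator _ hSmeas
      exact (hψ_meas.comp measurable_snd).mul
        (hk_meas.comp (measurable_fst.sub measurable_snd))
    have hG_sm : StronglyMeasurable fun t => ∫ s, G (t, s) :=
      hGmeas.stronglyMeasurable.integral_prod_right'
    have e : I = fun t => ∫ s, G (t, s) := by
      funext t
      rw [hIdef]
      show (∫ s in Set.Ioc a t, ψ s * k (t - s)) = _
      rw [← integral_indicator measurableSet_Ioc]
      apply integral_congr_ae
      apply ae_of_all
      intro s
      by_cases hs : s ∈ Set.Ioc a t
      · rw [Set.indicator_of_mem hs]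
        have hmem : (t, s) ∈ S := ⟨hs.1, hs.2⟩
        exact (Set.indicator_of_mem hmem
          (fun z : ℝ × ℝ => ψ z.2 * k (z.1 - z.2))).symm
      · rw [Set.indicator_of_notMem hs]
        have hnmem : (t, s) ∉ S := fun hz => hs ⟨hz.1, hz.2⟩
        exact (Set.indicator_of_notMem hnmem
          (fun z : ℝ × ℝ => ψ z.2 * k (z.1 - z.2))).symm
    rw [e]
    exact hG_sm.measurable
  -- the main chain
  have lhs_eq : ∫ t in Set.Ioc a (a + τ), |I t| ^ q
      = (∫⁻ t in Set.Ioc a (a + τ), ENNReal.ofReal (|I t| ^ q)).toReal := by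
    apply integral_eq_lintegral_of_nonneg_ae
    · exact ae_of_all _ fun t => by positivity
    · exact ((hImeas.abs.pow_const q).aestronglyMeasurable)
  set M : ℝ≥0∞ := A ^ (q / p) * ENNReal.ofReal C ^ (q / r) with hM
  have hMfin : M ≠ ⊤ := ENNReal.mul_ne_top
    (ENNReal.rpow_ne_top_of_nonneg (by positivity) hA')
    (ENNReal.rpow_ne_top_of_nonneg (by positivity) ENNReal.ofReal_ne_top)
  have hchain : ∫⁻ t in Set.Ioc a (a + τ), ENNReal.ofReal (|I t| ^ q) ≤ M :=
    le_trans (lintegral_mono hpt) master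
  have hreal : ∫ t in Set.Ioc a (a + τ), |I t| ^ q ≤ M.toReal := by
    rw [lhs_eq]
    exact ENNReal.toReal_mono hMfin hchain
  have hMto : M.toReal = (∫ s in Set.Ioc a b, |ψ s| ^ p) ^ (q / p) * C ^ (q / r) := by
    rw [hM, ENNReal.toReal_mul, ← ENNReal.toReal_rpow, ← ENNReal.toReal_rpow,
      hAeq, ENNReal.toReal_ofReal hInt_nonneg, ENNReal.toReal_ofReal hC0]
  have hLnonneg : 0 ≤ ∫ t in Set.Ioc a (a + τ), |I t| ^ q :=
    integral_nonneg fun t => by positivity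
  have step : (∫ t in Set.Ioc a (a + τ), |I t| ^ q) ^ (1 / q) ≤ M.toReal ^ (1 / q) :=
    Real.rpow_le_rpow hLnonneg hreal (by positivity)
  refine le_trans step ?_
  rw [hMto, Real.mul_rpow (by positivity) (by positivity),
    ← Real.rpow_mul hInt_nonneg, ← Real.rpow_mul hC0]
  have eqp : q / p * (1 / q) = 1 / p := by field_simp
  have eqr : q / r * (1 / q) = 1 / r := by field_simp
  rw [eqp, eqr, mul_comm]


/-- Lemma A.2: Young-type estimates for the singular and nonsingular
convolution operators. -/
theorem young_type_singular_estimates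
    (α p q r a b τ : ℝ)
    (hα : α ∈ Set.Ioo (0:ℝ) 1)
    (hp : 1 ≤ p) (hq : 1 ≤ q) (hr : 1 ≤ r) (hr' : r < 1 / (1 - α))
    (hpqr : 1 / q + 1 = 1 / p + 1 / r)
    (hab : a < b) (hτ : τ ∈ Set.Ioc 0 (b - a))
    (ψ : ℝ → ℝ) (hψ_meas : Measurable ψ)
    (hψ_Lp : IntegrableOn (fun s => |ψ s| ^ p) (Set.Ioc a b)) :
    (∫ t in Set.Ioc a (a + τ), |∫ s in Set.Ioc a t, ψ s * (t - s) ^ (α - 1)| ^ q) ^ (1 / q)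
        ≤ (τ ^ (1 - r * (1 - α)) / (1 - r * (1 - α))) ^ (1 / r)
            * (∫ s in Set.Ioc a b, |ψ s| ^ p) ^ (1 / p) ∧
    (∫ t in Set.Ioc a (a + τ), |∫ s in Set.Ioc a t, ψ s| ^ q) ^ (1 / q)
        ≤ τ ^ (1 / r) * (∫ s in Set.Ioc a b, |ψ s| ^ p) ^ (1 / p) := by
  obtain ⟨hα0, hα1⟩ := hα
  obtain ⟨hτ0, hτle⟩ := hτ
  have h1α : 0 < 1 - α := by linarith
  have hr0 : 0 < r := lt_of_lt_of_le one_pos hr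
  have hr1α : r * (1 - α) < 1 := by
    have := (lt_div_iff₀ h1α).mp hr'
    linarith
  have hτb : a + τ ≤ b := by linarith
  have hsexp : (-1:ℝ) < (α - 1) * r := by nlinarith
  have hden : 0 < 1 - r * (1 - α) := by linarith
  constructor
  · -- singular kernel
    set C1 : ℝ := τ ^ (1 - r * (1 - α)) / (1 - r * (1 - α)) with hC1
    have hC10 : 0 ≤ C1 := div_nonneg (Real.rpow_nonneg hτ0.le _) hden.le
    have hint : IntegrableOn (fun u : ℝ => u ^ ((α - 1) * r)) (Set.Ioo 0 τ) := by
      have h := intervalIntegral.intervalIntegrable_rpow' (a := 0) (b := τ) hsexp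
      rw [intervalIntegrable_iff] at h
      rw [Set.uIoc_of_le hτ0.le] at h
      exact h.mono_set Set.Ioo_subset_Ioc_self
    have hval : ∫ u in Set.Ioo 0 τ, u ^ ((α - 1) * r) = C1 := by
      rw [← integral_Ioc_eq_integral_Ioo, ← intervalIntegral.integral_of_le hτ0.le,
        integral_rpow (Or.inl hsexp)]
      rw [Real.zero_rpow (by linarith : (α - 1) * r + 1 ≠ 0)]
      have e : (α - 1) * r + 1 = 1 - r * (1 - α) := by ring
      rw [e, hC1, sub_zero]
    have hCk : ∫⁻ u in Set.Ioo 0 τ, ENNReal.ofReal ((fun u : ℝ => u ^ (α - 1)) u) ^ r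
        ≤ ENNReal.ofReal C1 := by
      have e : ∀ u ∈ Set.Ioo (0:ℝ) τ,
          ENNReal.ofReal (u ^ (α - 1)) ^ r = ENNReal.ofReal (u ^ ((α - 1) * r)) := by
        intro u hu
        rw [ENNReal.ofReal_rpow_of_nonneg (Real.rpow_nonneg hu.1.le _) hr0.le,
          ← Real.rpow_mul hu.1.le]
      rw [setLIntegral_congr_fun measurableSet_Ioo e]
      rw [← ofReal_integral_eq_lintegral_ofReal hint
        ((ae_restrict_iff' measurableSet_Ioo).mpr
          (ae_of_all _ fun u hu => Real.rpow_nonneg hu.1.le _))]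
      exact ENNReal.ofReal_le_ofReal (le_of_eq hval)
    exact young_real p q r a b τ hp hq hr hpqr hτ0 hτb ψ hψ_meas hψ_Lp
      (fun u => u ^ (α - 1)) (measurable_id.pow_const (α - 1))
      (fun u _ => Real.rpow_nonneg (by assumption) _) C1 hC10 hCk
  · -- constant kernel
    have hCk : ∫⁻ u in Set.Ioo 0 τ, ENNReal.ofReal ((fun _ : ℝ => (1:ℝ)) u) ^ r
        ≤ ENNReal.ofReal τ := by
      simp only [ENNReal.ofReal_one, ENNReal.one_rpow]
      rw [setLIntegral_one, Real.volume_Ioo, sub_zero]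
    have h2 := young_real p q r a b τ hp hq hr hpqr hτ0 hτb ψ hψ_meas hψ_Lp
      (fun _ => (1:ℝ)) measurable_const (fun _ _ => zero_le_one) τ hτ0.le hCk
    simpa only [mul_one] using h2
end
end

section
/- (Spike-variation set lemma, nonsingular version.) Let (X,‖·‖) be a Banach space and T > 0. Suppose φ : Δ → X satisfies: (i) ‖φ(t,s)‖ ≤ φ̄(s) for all (t,s) ∈ Δ, where φ̄ ∈ L¹([0,T];ℝ); and (ii) for almost all s ∈ [0,T], the map t ↦ φ(t,s) is continuous from [s,T] to X. Then for every δ ∈ (0,1) there exists a measurable set E_δ ⊆ [0,T] with Lebesgue measure |E_δ| = δT such that sup_{t∈[0,T]} ‖∫₀ᵗ ((1/δ)·1_{E_δ}(s) − 1) φ(t,s) ds‖ ≤ δ. -/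
open MeasureTheory Set Filter Topology

noncomputable section

namespace SpikeAux


def spikeSet (T δ : ℝ) (n : ℕ) : Set ℝ :=
  ⋃ k ∈ Finset.range n, Ico ((k : ℝ) * (T / n)) ((k : ℝ) * (T / n) + δ * (T / n))

lemma spikeSet_measurable (T δ : ℝ) (n : ℕ) : MeasurableSet (spikeSet T δ n) :=
  MeasurableSet.biUnion (Finset.range n).countable_toSet fun _ _ => measurableSet_Ico

lemma spikeSet_subset_block {T δ : ℝ} (hδ1 : δ ≤ 1) (hT : 0 ≤ T) (n : ℕ) (k : ℕ) :
    Ico ((k : ℝ) * (T / n)) ((k : ℝ) * (T / n) + δ * (T / n)) ⊆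
      Ico ((k : ℝ) * (T / n)) (((k : ℝ) + 1) * (T / n)) := by
  apply Ico_subset_Ico le_rfl
  have h : δ * (T / n) ≤ 1 * (T / n) :=
    mul_le_mul_of_nonneg_right hδ1 (by positivity)
  nlinarith [h]

lemma blocks_subset {T : ℝ} (hT : 0 ≤ T) {n k : ℕ} (hk : k < n) :
    Ico ((k : ℝ) * (T / n)) (((k : ℝ) + 1) * (T / n)) ⊆ Icc 0 T := by
  intro s hs
  have hTn : (0:ℝ) ≤ T / n := by positivity
  have h1 : (0:ℝ) ≤ (k : ℝ) * (T / n) := by positivity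
  have h2 : ((k : ℝ) + 1) * (T / n) ≤ (n : ℝ) * (T / n) := by
    apply mul_le_mul_of_nonneg_right _ hTn
    exact_mod_cast Nat.succ_le_of_lt hk
  have hn0 : 0 < n := Nat.pos_of_ne_zero (by rintro rfl; exact Nat.not_lt_zero k hk)
  have h3 : ((k:ℝ) + 1) * (T / n) ≤ T := by
    rcases eq_or_lt_of_le hT with rfl | hT'
    · simp
    · calc ((k:ℝ) + 1) * (T / n) ≤ (n : ℝ) * (T / n) := h2
        _ = T := by field_simp
  exact ⟨le_trans h1 hs.1, le_of_lt (lt_of_lt_of_le hs.2 h3)⟩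

lemma blocks_disjoint {T : ℝ} (hT : 0 ≤ T) (n : ℕ) :
    Set.Pairwise (Finset.range n : Set ℕ)
      (Function.onFun Disjoint fun k : ℕ =>
        Ico ((k : ℝ) * (T / n)) (((k : ℝ) + 1) * (T / n))) := by
  intro i _ j _ hij
  have key : ∀ a b : ℕ, a < b → Disjoint (Ico ((a : ℝ) * (T / n)) (((a : ℝ) + 1) * (T / n)))
      (Ico ((b : ℝ) * (T / n)) (((b : ℝ) + 1) * (T / n))) := by
    intro a b h
    rw [Set.Ico_disjoint_Ico]
    have : ((a : ℝ) + 1) * (T / n) ≤ (b : ℝ) * (T / n) :=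
      mul_le_mul_of_nonneg_right (by exact_mod_cast Nat.succ_le_of_lt h) (by positivity)
    exact le_trans (min_le_left _ _) (le_trans this (le_max_right _ _))
  rcases lt_or_gt_of_ne hij with h | h
  · exact key i j h
  · exact (key j i h).symm

lemma spikeSet_subset {T δ : ℝ} (hT : 0 ≤ T) (hδ1 : δ ≤ 1) (n : ℕ) :
    spikeSet T δ n ⊆ Icc 0 T := by
  apply Set.iUnion₂_subset
  intro k hk
  exact (spikeSet_subset_block hδ1 hT n k).trans (blocks_subset hT (Finset.mem_range.mp hk))

lemma spikeSet_volume {T δ : ℝ} (hT : 0 ≤ T) (hδ0 : 0 ≤ δ) (hδ1 : δ ≤ 1) {n : ℕ} (hn : 0 < n) :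
    volume (spikeSet T δ n) = ENNReal.ofReal (δ * T) := by
  rw [spikeSet, measure_biUnion_finset]
  · simp only [Real.volume_Ico, add_sub_cancel_left]
    rw [Finset.sum_const, Finset.card_range]
    rw [nsmul_eq_mul, ← ENNReal.ofReal_natCast, ← ENNReal.ofReal_mul (by positivity)]
    congr 1
    field_simp
  · intro i hi j hj hij
    exact (blocks_disjoint hT n hi hj hij).mono (spikeSet_subset_block hδ1 hT n i)
      (spikeSet_subset_block hδ1 hT n j)
  · intro k _
    exact measurableSet_Ico


/-- The oscillating multiplier. -/
def Hfun (T δ : ℝ) (n : ℕ) (s : ℝ) : ℝ :=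
  (1 / δ) * indicator (spikeSet T δ n) (fun _ => (1:ℝ)) s
    - indicator (Icc 0 T) (fun _ => (1:ℝ)) s

lemma Hfun_measurable (T δ : ℝ) (n : ℕ) : Measurable (Hfun T δ n) := by
  have h1 : MeasurableSet (spikeSet T δ n) :=
    MeasurableSet.biUnion (Finset.range n).countable_toSet fun _ _ => measurableSet_Ico
  exact ((measurable_const.mul (measurable_const.indicator h1)).sub
    (measurable_const.indicator measurableSet_Icc))

lemma abs_Hfun_le {T δ : ℝ} (hδ0 : 0 < δ) (hδ1 : δ ≤ 1) {n : ℕ}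
    (hsub : spikeSet T δ n ⊆ Icc 0 T) (s : ℝ) : |Hfun T δ n s| ≤ 1 / δ := by
  have hc : (1:ℝ) ≤ 1 / δ := by
    rw [le_div_iff₀ hδ0]; linarith
  by_cases h1 : s ∈ spikeSet T δ n
  · have h2 : s ∈ Icc (0:ℝ) T := hsub h1
    simp only [Hfun, indicator_of_mem h1, indicator_of_mem h2, mul_one]
    rw [abs_of_nonneg (by linarith)]
    linarith
  · by_cases h2 : s ∈ Icc (0:ℝ) T
    · simp only [Hfun, indicator_of_notMem h1, indicator_of_mem h2, mul_zero, zero_sub, abs_neg,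
        abs_one]
      exact hc
    · simp only [Hfun, indicator_of_notMem h1, indicator_of_notMem h2, mul_zero, sub_zero,
        abs_zero]
      positivity

lemma Ico_eq_biUnion {T : ℝ} (hT : 0 < T) {n : ℕ} (hn : 0 < n) :
    Ico (0:ℝ) T = ⋃ k ∈ Finset.range n, Ico ((k:ℝ) * (T/n)) (((k:ℝ) + 1) * (T/n)) := by
  have hTn : 0 < T / n := by positivity
  ext s
  simp only [mem_Ico, mem_iUnion, Finset.mem_range, exists_prop]
  constructor
  · rintro ⟨hs0, hsT⟩
    refine ⟨⌊s / (T/n)⌋₊, ?_, ?_, ?_⟩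
    · have h1 : (⌊s / (T/n)⌋₊ : ℝ) ≤ s / (T/n) := Nat.floor_le (by positivity)
      have h2 : s / (T/n) < n := by
        rw [div_lt_iff₀ hTn]
        calc s < T := hsT
          _ = (n:ℝ) * (T/n) := by field_simp
      exact_mod_cast lt_of_le_of_lt h1 h2
    · rw [← le_div_iff₀ hTn]
      exact Nat.floor_le (by positivity)
    · rw [← div_lt_iff₀ hTn]
      exact Nat.lt_floor_add_one _
  · rintro ⟨k, hk, h1, h2⟩
    have h3 : (0:ℝ) ≤ (k:ℝ) * (T/n) := by positivity
    have h4 : ((k:ℝ) + 1) * (T/n) ≤ T := by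
      have : ((k:ℝ) + 1) ≤ (n:ℝ) := by exact_mod_cast Nat.succ_le_of_lt hk
      calc ((k:ℝ) + 1) * (T/n) ≤ (n:ℝ) * (T/n) :=
            mul_le_mul_of_nonneg_right this (le_of_lt hTn)
        _ = T := by field_simp
    exact ⟨le_trans h3 h1, lt_of_lt_of_le h2 h4⟩

lemma Hfun_on_block {T δ : ℝ} (hT : 0 ≤ T) (hδ1 : δ ≤ 1) {n k : ℕ} (hk : k < n) {s : ℝ}
    (hs : s ∈ Ico ((k:ℝ) * (T/n)) (((k:ℝ) + 1) * (T/n))) :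
    Hfun T δ n s = (1 / δ) *
      indicator (Ico ((k:ℝ) * (T/n)) ((k:ℝ) * (T/n) + δ * (T/n))) (fun _ => (1:ℝ)) s - 1 := by
  have hIcc : s ∈ Icc (0:ℝ) T := blocks_subset hT hk hs
  have hind : indicator (spikeSet T δ n) (fun _ => (1:ℝ)) s =
      indicator (Ico ((k:ℝ) * (T/n)) ((k:ℝ) * (T/n) + δ * (T/n))) (fun _ => (1:ℝ)) s := by
    by_cases hA : s ∈ Ico ((k:ℝ) * (T/n)) ((k:ℝ) * (T/n) + δ * (T/n))
    · rw [indicator_of_mem hA, indicator_of_mem]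
      exact mem_biUnion (Finset.mem_range.mpr hk) hA
    · rw [indicator_of_notMem hA, indicator_of_notMem]
      intro hmem
      rcases mem_iUnion₂.mp hmem with ⟨j, hj, hsj⟩
      rcases eq_or_ne j k with rfl | hjk
      · exact hA hsj
      · have h1 : s ∈ Ico ((j:ℝ) * (T/n)) (((j:ℝ) + 1) * (T/n)) :=
          spikeSet_subset_block hδ1 hT n j hsj
        exact Set.disjoint_left.mp
          (blocks_disjoint hT n (Finset.mem_coe.mpr hj)
            (Finset.mem_coe.mpr (Finset.mem_range.mpr hk)) hjk) h1 hs
  rw [Hfun, hind, indicator_of_mem hIcc]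

variable {X : Type*} [NormedAddCommGroup X] [NormedSpace ℝ X] [CompleteSpace X]

lemma block_estimate {T δ : ℝ} (hT : 0 < T) (hδ0 : 0 < δ) (hδ1 : δ ≤ 1) {n : ℕ} (hn : 0 < n)
    {g : ℝ → X} (hg : Continuous g) {ε : ℝ} (hε : 0 ≤ ε)
    (hmod : ∀ x y : ℝ, |x - y| ≤ T / n → ‖g x - g y‖ ≤ ε) :
    ‖∫ s, Hfun T δ n s • g s‖ ≤ 2 * T * ε := by
  have hTn : 0 < T / n := by positivity
  have hδTn : 0 ≤ δ * (T / n) := by positivity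
  have hsub := spikeSet_subset (le_of_lt hT) hδ1 (n := n)
  have hHm := Hfun_measurable T δ n
  -- integrand is supported on Icc 0 T
  have hsupp : (fun s => Hfun T δ n s • g s)
      = (Icc (0:ℝ) T).indicator (fun s => Hfun T δ n s • g s) := by
    funext s
    by_cases h : s ∈ Icc (0:ℝ) T
    · rw [indicator_of_mem h]
    · rw [indicator_of_notMem h]
      have h1 : s ∉ spikeSet T δ n := fun hs => h (hsub hs)
      simp [Hfun, indicator_of_notMem h1, indicator_of_notMem h]
  -- integrability on blocks
  have hint : ∀ S : Set ℝ, MeasurableSet S → S ⊆ Icc 0 T →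
      IntegrableOn (fun s => Hfun T δ n s • g s) S := by
    intro S hSm hSsub
    apply Integrable.mono' ((hg.norm.integrableOn_Icc.mono_set hSsub).const_mul (1/δ))
    · exact ((hHm.stronglyMeasurable.smul hg.stronglyMeasurable)).aestronglyMeasurable
    · filter_upwards with s
      rw [norm_smul]
      exact mul_le_mul_of_nonneg_right (by simpa using abs_Hfun_le hδ0 hδ1 hsub s)
        (norm_nonneg _)
  -- reduce to the union of blocks
  rw [hsupp, integral_indicator measurableSet_Icc, integral_Icc_eq_integral_Ico,
    Ico_eq_biUnion hT hn, integral_biUnion_finset _ (fun k _ => measurableSet_Ico)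
      (blocks_disjoint (le_of_lt hT) n)
      (fun k hk => (hint _ measurableSet_Ico (blocks_subset (le_of_lt hT)
        (Finset.mem_range.mp hk))))]
  -- per-block estimate
  have hblock : ∀ k ∈ Finset.range n,
      ‖∫ s in Ico ((k:ℝ) * (T/n)) (((k:ℝ) + 1) * (T/n)), Hfun T δ n s • g s‖
        ≤ 2 * (T / n) * ε := by
    intro k hk
    have hkn := Finset.mem_range.mp hk
    set a : ℝ := (k:ℝ) * (T/n) with ha
    set A : Set ℝ := Ico a (a + δ * (T/n)) with hA
    set I : Set ℝ := Ico a (((k:ℝ) + 1) * (T/n)) with hI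
    have hIb : ((k:ℝ) + 1) * (T/n) = a + T/n := by ring
    have hAI : A ⊆ I := spikeSet_subset_block hδ1 (le_of_lt hT) n k
    have hgI : IntegrableOn g I := hg.integrableOn_Icc.mono_set
      ((blocks_subset (le_of_lt hT) hkn))
    have hgA : IntegrableOn g A := hgI.mono_set hAI
    set v : X := g a with hv
    have e0 : ∫ s in I, Hfun T δ n s • g s
        = ∫ s in I, ((1/δ) * A.indicator (fun _ => (1:ℝ)) s - 1) • g s := by
      apply setIntegral_congr_fun measurableSet_Ico
      intro s hs
      dsimp only
      rw [Hfun_on_block (le_of_lt hT) hδ1 hkn hs]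
    have e1 : ∀ s, ((1/δ) * A.indicator (fun _ => (1:ℝ)) s - 1) • g s
        = (1/δ) • A.indicator g s - g s := by
      intro s
      by_cases h : s ∈ A
      · simp [indicator_of_mem h, sub_smul, smul_smul]
      · simp [indicator_of_notMem h]
    have hi1 : IntegrableOn (fun s => (1/δ) • A.indicator g s) I :=
      (Integrable.smul (1/δ) (hgA.integrable_indicator measurableSet_Ico)).integrableOn
    have e2 : ∫ s in I, Hfun T δ n s • g s
        = (1/δ) • (∫ s in A, g s) - ∫ s in I, g s := by
      rw [e0, setIntegral_congr_fun measurableSet_Ico (fun s _ => e1 s),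
        integral_sub hi1 hgI, integral_smul, setIntegral_indicator measurableSet_Ico,
        inter_eq_self_of_subset_right hAI]
    have vA : volume A = ENNReal.ofReal (δ * (T/n)) := by
      rw [hA, Real.volume_Ico]; congr 1; ring
    have vI : volume I = ENNReal.ofReal (T/n) := by
      rw [hI, hIb, Real.volume_Ico]; congr 1; ring
    have e3 : (1/δ) • (∫ s in A, g s) - ∫ s in I, g s
        = (1/δ) • (∫ s in A, (g s - v)) - ∫ s in I, (g s - v) := by
      have i1 : ∫ s in A, (g s - v) = (∫ s in A, g s) - (δ * (T/n)) • v := by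
        rw [integral_sub hgA
          (integrableOn_const (by rw [vA]; exact ENNReal.ofReal_ne_top)),
          setIntegral_const, measureReal_def, vA, ENNReal.toReal_ofReal hδTn]
      have i2 : ∫ s in I, (g s - v) = (∫ s in I, g s) - (T/n) • v := by
        rw [integral_sub hgI
          (integrableOn_const (by rw [vI]; exact ENNReal.ofReal_ne_top)),
          setIntegral_const, measureReal_def, vI, ENNReal.toReal_ofReal (le_of_lt hTn)]
      have key : (1/δ) • ((δ * (T/n)) • v) = (T/n) • v := by
        rw [smul_smul]
        congr 1
        rw [← mul_assoc, one_div, inv_mul_cancel₀ hδ0.ne', one_mul]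
      rw [i1, i2, smul_sub, key]
      module
    have hnormA : ‖∫ s in A, (g s - v)‖ ≤ ε * (δ * (T/n)) := by
      have := norm_setIntegral_le_of_norm_le_const (C := ε)
        (by rw [vA]; exact ENNReal.ofReal_lt_top)
        (f := fun s => g s - v) ?_
      · rwa [measureReal_def, vA, ENNReal.toReal_ofReal hδTn] at this
      · intro x hx
        apply hmod
        rw [abs_of_nonneg (by linarith [hx.1])]
        have h2 : δ * (T/n) ≤ T/n := by nlinarith
        linarith [hx.2]
    have hnormI : ‖∫ s in I, (g s - v)‖ ≤ ε * (T/n) := by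
      have := norm_setIntegral_le_of_norm_le_const (C := ε)
        (by rw [vI]; exact ENNReal.ofReal_lt_top)
        (f := fun s => g s - v) ?_
      · rwa [measureReal_def, vI, ENNReal.toReal_ofReal (le_of_lt hTn)] at this
      · intro x hx
        apply hmod
        rw [abs_of_nonneg (by linarith [hx.1])]
        rw [hI, hIb] at hx
        linarith [hx.2]
    calc ‖∫ s in I, Hfun T δ n s • g s‖
        = ‖(1/δ) • (∫ s in A, (g s - v)) - ∫ s in I, (g s - v)‖ := by rw [e2, e3]
      _ ≤ (1/δ) * ‖∫ s in A, (g s - v)‖ + ‖∫ s in I, (g s - v)‖ := by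
          refine le_trans (norm_sub_le _ _) ?_
          rw [norm_smul, Real.norm_eq_abs, abs_of_pos (by positivity)]
      _ ≤ (1/δ) * (ε * (δ * (T/n))) + ε * (T/n) := by
          have := mul_le_mul_of_nonneg_left hnormA (le_of_lt (by positivity : (0:ℝ) < 1/δ))
          linarith [hnormI, this]
      _ = 2 * (T/n) * ε := by field_simp; ring
  calc ‖∑ k ∈ Finset.range n, ∫ s in Ico ((k:ℝ) * (T/n)) (((k:ℝ) + 1) * (T/n)),
        Hfun T δ n s • g s‖
      ≤ ∑ k ∈ Finset.range n, ‖∫ s in Ico ((k:ℝ) * (T/n)) (((k:ℝ) + 1) * (T/n)),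
        Hfun T δ n s • g s‖ := norm_sum_le _ _
    _ ≤ ∑ _k ∈ Finset.range n, 2 * (T/n) * ε := Finset.sum_le_sum hblock
    _ = 2 * T * ε := by
        rw [Finset.sum_const, Finset.card_range, nsmul_eq_mul]
        field_simp

lemma Hfun_smul_integrable {T δ : ℝ} (hδ0 : 0 < δ) (hδ1 : δ ≤ 1) (hT : 0 ≤ T) (n : ℕ)
    {ψ : ℝ → X} (hψ : Integrable ψ) : Integrable (fun s => Hfun T δ n s • ψ s) := by
  apply Integrable.mono' (hψ.norm.const_mul (1/δ))
  · exact ((Hfun_measurable T δ n).stronglyMeasurable.aestronglyMeasurable.smul hψ.1)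
  · filter_upwards with s
    rw [norm_smul]
    exact mul_le_mul_of_nonneg_right
      (by simpa using abs_Hfun_le hδ0 hδ1 (spikeSet_subset hT hδ1 n) s) (norm_nonneg _)

/-- Key oscillation lemma: the spike multipliers integrate any fixed `L¹` function to `0`
in the limit. -/
lemma tendsto_Hfun_integral {T δ : ℝ} (hT : 0 < T) (hδ0 : 0 < δ) (hδ1 : δ ≤ 1)
    {ψ : ℝ → X} (hψ : Integrable ψ) :
    Filter.Tendsto (fun n => ∫ s, Hfun T δ n s • ψ s) Filter.atTop (nhds 0) := by
  rw [Metric.tendsto_atTop]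
  intro ε hε
  obtain ⟨g, gsupp, gapprox, gcont, gint⟩ :=
    hψ.exists_hasCompactSupport_integral_sub_le (show (0:ℝ) < ε * δ / 4 by positivity)
  set ε' : ℝ := ε / (4 * (T + 1)) with hε'
  have hε'pos : 0 < ε' := by positivity
  obtain ⟨η, hη, hgmod⟩ := Metric.uniformContinuous_iff.mp
    (gsupp.uniformContinuous_of_continuous gcont) ε' hε'pos
  obtain ⟨N₀, hN₀⟩ := exists_nat_gt (T / η)
  refine ⟨N₀ + 1, fun n hn => ?_⟩
  have hn1 : 0 < n := lt_of_lt_of_le (Nat.succ_pos N₀) hn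
  have hTn : T / n < η := by
    rw [div_lt_iff₀ (by exact_mod_cast hn1)]
    have h1 : T / η < n := lt_of_lt_of_le hN₀ (by exact_mod_cast le_trans (Nat.le_succ N₀) hn)
    rw [div_lt_iff₀ hη] at h1
    linarith
  have hmod : ∀ x y : ℝ, |x - y| ≤ T / n → ‖g x - g y‖ ≤ ε' := by
    intro x y h
    have : dist x y < η := lt_of_le_of_lt (by rwa [Real.dist_eq]) hTn
    exact le_of_lt (by simpa [dist_eq_norm] using hgmod this)
  have hblock := block_estimate hT hδ0 hδ1 hn1 gcont (le_of_lt hε'pos) hmod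
  have hint1 := Hfun_smul_integrable (X := X) hδ0 hδ1 (le_of_lt hT) n hψ
  have hint2 := Hfun_smul_integrable (X := X) hδ0 hδ1 (le_of_lt hT) n gint
  have hsplit : ∫ s, Hfun T δ n s • ψ s
      = (∫ s, Hfun T δ n s • g s) + ∫ s, Hfun T δ n s • (ψ s - g s) := by
    have : Integrable (fun s => Hfun T δ n s • (ψ s - g s)) := by
      have := hint1.sub hint2
      simpa [smul_sub, Pi.sub_def] using this
    rw [← integral_add hint2 this]
    congr 1
    funext s
    rw [smul_sub]
    abel
  have hrem : ‖∫ s, Hfun T δ n s • (ψ s - g s)‖ ≤ (1/δ) * (ε * δ / 4) := by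
    refine le_trans (norm_integral_le_integral_norm _) ?_
    have h1 : ∫ s, ‖Hfun T δ n s • (ψ s - g s)‖ ≤ ∫ s, (1/δ) * ‖ψ s - g s‖ := by
      apply integral_mono_of_nonneg (Filter.Eventually.of_forall fun s => norm_nonneg _)
        ((hψ.sub gint).norm.const_mul (1/δ))
      filter_upwards with s
      rw [norm_smul]
      exact mul_le_mul_of_nonneg_right
        (by simpa using abs_Hfun_le hδ0 hδ1 (spikeSet_subset (le_of_lt hT) hδ1 n) s)
        (norm_nonneg _)
    refine le_trans h1 ?_
    rw [integral_const_mul]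
    exact mul_le_mul_of_nonneg_left gapprox (by positivity)
  rw [dist_zero_right, hsplit]
  have htot : ‖(∫ s, Hfun T δ n s • g s) + ∫ s, Hfun T δ n s • (ψ s - g s)‖
      ≤ 2 * T * ε' + (1/δ) * (ε * δ / 4) :=
    le_trans (norm_add_le _ _) (add_le_add hblock hrem)
  refine lt_of_le_of_lt htot ?_
  have h2 : (1/δ) * (ε * δ / 4) = ε / 4 := by field_simp
  have h3 : 2 * T * ε' < ε / 2 := by
    have h4 : 2 * T * ε' = (2 * T * ε) / (4 * (T + 1)) := by
      rw [hε']; ring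
    rw [h4, div_lt_div_iff₀ (by positivity) (by norm_num : (0:ℝ) < 2)]
    nlinarith
  linarith




/-- Uniform absolute continuity of the integral of `φbar`. -/
lemma U1 {T : ℝ} (hT : 0 < T) {φbar : ℝ → ℝ}
    (hφbar_int : IntegrableOn φbar (Icc 0 T))
    (hφbar_nonneg : ∀ s ∈ Icc (0:ℝ) T, 0 ≤ φbar s)
    {ε : ℝ} (hε : 0 < ε) :
    ∃ η > 0, ∀ τ t : ℝ, 0 ≤ τ → τ ≤ t → t ≤ T → t - τ ≤ η →
      ∫ s in Ioc τ t, φbar s ≤ ε := by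
  set ν := volume.restrict (Icc (0:ℝ) T) with hν
  set β : ℝ → ℝ := fun u => ∫ s, indicator (Ioc 0 u) (fun _ => (1:ℝ)) s * φbar s ∂ν with hβ
  have hφbar_sm : AEStronglyMeasurable φbar ν := hφbar_int.1
  have hmeas : ∀ u : ℝ, AEStronglyMeasurable
      (fun s => indicator (Ioc 0 u) (fun _ => (1:ℝ)) s * φbar s) ν := fun u =>
    (((measurable_const.indicator measurableSet_Ioc).stronglyMeasurable.aestronglyMeasurable).mul
      hφbar_sm)
  -- β is continuous on [0,T]
  have hβcont : ContinuousOn β (Icc 0 T) := by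
    intro u₀ hu₀
    have key : Tendsto (fun u => ∫ s, indicator (Ioc 0 u) (fun _ => (1:ℝ)) s * φbar s ∂ν)
        (𝓝[Icc (0:ℝ) T] u₀) (𝓝 (∫ s, indicator (Ioc 0 u₀) (fun _ => (1:ℝ)) s * φbar s ∂ν)) := by
      apply tendsto_integral_filter_of_dominated_convergence (fun s => |φbar s|)
      · exact Eventually.of_forall fun u => hmeas u
      · refine Eventually.of_forall fun u => Eventually.of_forall fun s => ?_
        by_cases h : s ∈ Ioc 0 u
        · simp [indicator_of_mem h, Real.norm_eq_abs]
        · simp [indicator_of_notMem h]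
      · exact hφbar_int.abs
      · have hne : ∀ᵐ s ∂ν, s ≠ u₀ := by
          refine ae_restrict_of_ae ?_
          rw [ae_iff]
          have : {s : ℝ | ¬s ≠ u₀} = {u₀} := by ext s; simp
          rw [this]
          exact measure_singleton u₀
        filter_upwards [hne] with s hsne
        rcases lt_or_gt_of_ne hsne with hlt | hgt
        · by_cases hs0 : 0 < s
          · have hev : ∀ᶠ u in 𝓝[Icc 0 T] u₀, s ∈ Ioc 0 u := by
              have h' : ∀ᶠ u in 𝓝[Icc (0:ℝ) T] u₀, s < u :=
                nhdsWithin_le_nhds (lt_mem_nhds hlt)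
              filter_upwards [h'] with u hu
              exact ⟨hs0, le_of_lt hu⟩
            refine Tendsto.congr' ?_ tendsto_const_nhds
            filter_upwards [hev] with u hu
            rw [indicator_of_mem (show s ∈ Ioc 0 u₀ from ⟨hs0, le_of_lt hlt⟩)]
            rw [indicator_of_mem hu]
          · have h0 : ∀ u : ℝ, indicator (Ioc 0 u) (fun _ => (1:ℝ)) s * φbar s = 0 := by
              intro u
              rw [indicator_of_notMem (fun hc => hs0 hc.1), zero_mul]
            simp only [h0]
            exact tendsto_const_nhds
        · have hev : ∀ᶠ u in 𝓝[Icc 0 T] u₀, s ∉ Ioc 0 u := by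
            have h' : ∀ᶠ u in 𝓝[Icc (0:ℝ) T] u₀, u < s :=
              nhdsWithin_le_nhds (gt_mem_nhds hgt)
            filter_upwards [h'] with u hu
            exact fun hc => absurd hc.2 (not_le.mpr hu)
          refine Tendsto.congr' ?_ tendsto_const_nhds
          filter_upwards [hev] with u hu
          rw [indicator_of_notMem (fun hc : s ∈ Ioc 0 u₀ => absurd hc.2 (not_le.mpr hgt)),
            zero_mul, indicator_of_notMem hu, zero_mul]
    exact key
  have hUC := isCompact_Icc.uniformContinuousOn_of_continuous hβcont
  rw [Metric.uniformContinuousOn_iff] at hUC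
  obtain ⟨η, hη, hUC⟩ := hUC ε hε
  refine ⟨η / 2, by positivity, fun τ t hτ0 hτt htT hdist => ?_⟩
  have hτT : τ ≤ T := le_trans hτt htT
  have ht0 : 0 ≤ t := le_trans hτ0 hτt
  -- identify β u with the set integral
  have hident : ∀ u : ℝ, 0 ≤ u → u ≤ T → β u = ∫ s in Ioc 0 u, φbar s := by
    intro u hu0 huT
    have e : β u = ∫ s, indicator (Ioc 0 u) φbar s ∂ν := by
      refine integral_congr_ae (Eventually.of_forall fun s => ?_)
      by_cases h : s ∈ Ioc 0 u
      · simp [indicator_of_mem h]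
      · simp [indicator_of_notMem h]
    rw [e, hν, integral_indicator measurableSet_Ioc,
      Measure.restrict_restrict measurableSet_Ioc,
      inter_eq_self_of_subset_left
        (show Ioc (0:ℝ) u ⊆ Icc 0 T from fun x hx => ⟨le_of_lt hx.1, le_trans hx.2 huT⟩)]
  have hsplit : ∫ s in Ioc 0 t, φbar s = (∫ s in Ioc 0 τ, φbar s) + ∫ s in Ioc τ t, φbar s := by
    rw [← Ioc_union_Ioc_eq_Ioc hτ0 hτt,
      setIntegral_union (Ioc_disjoint_Ioc_of_le le_rfl) measurableSet_Ioc
        (hφbar_int.mono_set fun s hs => ⟨le_of_lt hs.1, le_trans hs.2 hτT⟩)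
        (hφbar_int.mono_set fun s hs => ⟨le_trans hτ0 (le_of_lt hs.1), le_trans hs.2 htT⟩)]
  have hdist2 : dist t τ < η := by
    rw [Real.dist_eq, abs_of_nonneg (by linarith)]
    linarith
  have := hUC t ⟨ht0, htT⟩ τ ⟨hτ0, hτT⟩ hdist2
  rw [Real.dist_eq, hident t ht0 htT, hident τ hτ0 hτT, hsplit] at this
  have habs := le_of_lt (lt_of_le_of_lt (le_abs_self _) this)
  linarith [habs]

/-- Uniform equicontinuity in the first variable, in integral form. -/
lemma U2 {T : ℝ} (hT : 0 < T) {φ : ℝ → ℝ → X} {φbar : ℝ → ℝ}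
    (hφ_meas : StronglyMeasurable (Function.uncurry φ))
    (hφbar_int : IntegrableOn φbar (Icc 0 T))
    (hbound : ∀ t s : ℝ, 0 ≤ s → s ≤ t → t ≤ T → ‖φ t s‖ ≤ φbar s)
    (hcont : ∀ᵐ s ∂(volume.restrict (Icc 0 T)), ContinuousOn (fun t => φ t s) (Icc s T))
    {ε : ℝ} (hε : 0 < ε) :
    ∃ η > 0, ∀ τ t : ℝ, 0 ≤ τ → τ ≤ t → t ≤ T → t - τ ≤ η →
      ∫ s in Ioc 0 τ, ‖φ t s - φ τ s‖ ≤ ε := by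
  set ν := volume.restrict (Icc (0:ℝ) T) with hν
  set K : Set (ℝ × ℝ) := Icc (0:ℝ) T ×ˢ Icc (0:ℝ) T with hK
  have hslice : ∀ t : ℝ, StronglyMeasurable (fun s => φ t s) := fun t =>
    hφ_meas.comp_measurable measurable_prodMk_left
  set F : ℝ × ℝ → ℝ → ℝ := fun p s =>
    indicator (Ioc 0 (min p.1 p.2)) (fun _ => (1:ℝ)) s * ‖φ p.1 s - φ p.2 s‖ with hF
  set Ψ : ℝ × ℝ → ℝ := fun p => ∫ s, F p s ∂ν with hΨ
  have hφbar0 : ∀ s ∈ Icc (0:ℝ) T, 0 ≤ φbar s := fun s hs =>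
    le_trans (norm_nonneg _) (hbound s s hs.1 le_rfl hs.2)
  have hFmeas : ∀ p : ℝ × ℝ, AEStronglyMeasurable (F p) ν := fun p =>
    ((measurable_const.indicator measurableSet_Ioc).stronglyMeasurable.mul
      (((hslice p.1).sub (hslice p.2)).norm)).aestronglyMeasurable
  have hne : ∀ c : ℝ, ∀ᵐ s ∂ν, s ≠ c := by
    intro c
    refine ae_restrict_of_ae ?_
    rw [ae_iff]
    have : {s : ℝ | ¬s ≠ c} = {c} := by ext s; simp
    rw [this]
    exact measure_singleton c
  have hΨcont : ContinuousOn Ψ K := by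
    intro p₀ hp₀
    have hp₀K := hp₀
    rw [hK, mem_prod] at hp₀K
    have key : Tendsto (fun p => ∫ s, F p s ∂ν) (𝓝[K] p₀) (𝓝 (∫ s, F p₀ s ∂ν)) := by
      apply tendsto_integral_filter_of_dominated_convergence (fun s => 2 * φbar s)
      · exact Eventually.of_forall hFmeas
      · filter_upwards [self_mem_nhdsWithin] with p hp
        rw [hK, mem_prod] at hp
        filter_upwards [ae_restrict_mem measurableSet_Icc] with s hs
        by_cases h : s ∈ Ioc 0 (min p.1 p.2)
        · have h1 : ‖φ p.1 s‖ ≤ φbar s :=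
            hbound p.1 s (le_of_lt h.1) (le_trans h.2 (min_le_left _ _)) hp.1.2
          have h2 : ‖φ p.2 s‖ ≤ φbar s :=
            hbound p.2 s (le_of_lt h.1) (le_trans h.2 (min_le_right _ _)) hp.2.2
          rw [hF]
          dsimp only
          rw [indicator_of_mem h, one_mul, Real.norm_eq_abs, abs_of_nonneg (norm_nonneg _)]
          calc ‖φ p.1 s - φ p.2 s‖ ≤ ‖φ p.1 s‖ + ‖φ p.2 s‖ := norm_sub_le _ _
            _ ≤ 2 * φbar s := by linarith
        · rw [hF]
          dsimp only
          rw [indicator_of_notMem h, zero_mul, norm_zero]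
          linarith [hφbar0 s hs]
      · exact hφbar_int.const_mul 2
      · filter_upwards [hcont, ae_restrict_mem measurableSet_Icc, hne (min p₀.1 p₀.2)]
          with s hcs hsIcc hsne
        have hmin : Tendsto (fun p : ℝ × ℝ => min p.1 p.2) (𝓝[K] p₀) (𝓝 (min p₀.1 p₀.2)) :=
          ((continuous_fst.min continuous_snd).tendsto p₀).mono_left nhdsWithin_le_nhds
        rcases lt_or_gt_of_ne hsne with hlt | hgt
        · by_cases hs0 : 0 < s
          · have hminev : ∀ᶠ p in 𝓝[K] p₀, s < min p.1 p.2 := hmin.eventually (lt_mem_nhds hlt)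
            have hfst : Tendsto (fun p : ℝ × ℝ => p.1) (𝓝[K] p₀) (𝓝[Icc s T] p₀.1) := by
              rw [tendsto_nhdsWithin_iff]
              constructor
              · exact (continuous_fst.tendsto p₀).mono_left nhdsWithin_le_nhds
              · filter_upwards [hminev, self_mem_nhdsWithin] with p hpm hpK
                rw [hK, mem_prod] at hpK
                exact ⟨le_of_lt (lt_of_lt_of_le hpm (min_le_left _ _)), hpK.1.2⟩
            have hsnd : Tendsto (fun p : ℝ × ℝ => p.2) (𝓝[K] p₀) (𝓝[Icc s T] p₀.2) := by
              rw [tendsto_nhdsWithin_iff]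
              constructor
              · exact (continuous_snd.tendsto p₀).mono_left nhdsWithin_le_nhds
              · filter_upwards [hminev, self_mem_nhdsWithin] with p hpm hpK
                rw [hK, mem_prod] at hpK
                exact ⟨le_of_lt (lt_of_lt_of_le hpm (min_le_right _ _)), hpK.2.2⟩
            have hm1 : p₀.1 ∈ Icc s T :=
              ⟨le_trans (le_of_lt hlt) (min_le_left _ _), hp₀K.1.2⟩
            have hm2 : p₀.2 ∈ Icc s T :=
              ⟨le_trans (le_of_lt hlt) (min_le_right _ _), hp₀K.2.2⟩
            have h1 : Tendsto (fun p : ℝ × ℝ => φ p.1 s) (𝓝[K] p₀) (𝓝 (φ p₀.1 s)) :=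
              Filter.Tendsto.comp (hcs p₀.1 hm1) hfst
            have h2 : Tendsto (fun p : ℝ × ℝ => φ p.2 s) (𝓝[K] p₀) (𝓝 (φ p₀.2 s)) :=
              Filter.Tendsto.comp (hcs p₀.2 hm2) hsnd
            have htend := (h1.sub h2).norm
            have hFp₀ : F p₀ s = ‖φ p₀.1 s - φ p₀.2 s‖ := by
              rw [hF]
              dsimp only
              rw [indicator_of_mem (show s ∈ Ioc 0 (min p₀.1 p₀.2) from ⟨hs0, le_of_lt hlt⟩),
                one_mul]
            rw [hFp₀]
            refine Tendsto.congr' ?_ htend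
            filter_upwards [hminev] with p hpm
            rw [hF]
            dsimp only
            rw [indicator_of_mem (show s ∈ Ioc 0 (min p.1 p.2) from ⟨hs0, le_of_lt hpm⟩), one_mul]
          · have h0 : ∀ p : ℝ × ℝ, F p s = 0 := by
              intro p
              rw [hF]
              dsimp only
              rw [indicator_of_notMem (fun hc => hs0 hc.1), zero_mul]
            simp only [h0]
            exact tendsto_const_nhds
        · have hminev : ∀ᶠ p in 𝓝[K] p₀, min p.1 p.2 < s := hmin.eventually (gt_mem_nhds hgt)
          have hFp₀ : F p₀ s = 0 := by
            rw [hF]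
            dsimp only
            rw [indicator_of_notMem (fun hc : s ∈ Ioc 0 (min p₀.1 p₀.2) =>
              absurd hc.2 (not_le.mpr hgt)), zero_mul]
          rw [hFp₀]
          refine Tendsto.congr' ?_ tendsto_const_nhds
          filter_upwards [hminev] with p hpm
          rw [hF]
          dsimp only
          rw [indicator_of_notMem (fun hc : s ∈ Ioc 0 (min p.1 p.2) =>
            absurd hc.2 (not_le.mpr hpm)), zero_mul]
    exact key
  have hUC := ((isCompact_Icc.prod isCompact_Icc).uniformContinuousOn_of_continuous hΨcont)
  rw [Metric.uniformContinuousOn_iff] at hUC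
  obtain ⟨η, hη, hUC⟩ := hUC ε hε
  refine ⟨η / 2, by positivity, fun τ t hτ0 hτt htT hdist => ?_⟩
  have hτT : τ ≤ T := le_trans hτt htT
  have ht0 : 0 ≤ t := le_trans hτ0 hτt
  have hident : Ψ (t, τ) = ∫ s in Ioc 0 τ, ‖φ t s - φ τ s‖ := by
    have hmin : min t τ = τ := min_eq_right hτt
    have e : Ψ (t, τ) = ∫ s, indicator (Ioc 0 τ) (fun s => ‖φ t s - φ τ s‖) s ∂ν := by
      refine integral_congr_ae (Eventually.of_forall fun s => ?_)
      rw [hF]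
      dsimp only
      rw [hmin]
      by_cases h : s ∈ Ioc 0 τ
      · rw [indicator_of_mem h, indicator_of_mem h, one_mul]
      · rw [indicator_of_notMem h, indicator_of_notMem h, zero_mul]
    rw [e, hν, integral_indicator measurableSet_Ioc,
      Measure.restrict_restrict measurableSet_Ioc,
      inter_eq_self_of_subset_left
        (show Ioc (0:ℝ) τ ⊆ Icc 0 T from fun x hx => ⟨le_of_lt hx.1, le_trans hx.2 hτT⟩)]
  have hzero : Ψ (τ, τ) = 0 := by
    rw [hΨ]
    dsimp only
    simp [hF]
  have hmemK1 : (t, τ) ∈ K := by rw [hK, mem_prod]; exact ⟨⟨ht0, htT⟩, ⟨hτ0, hτT⟩⟩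
  have hmemK2 : (τ, τ) ∈ K := by rw [hK, mem_prod]; exact ⟨⟨hτ0, hτT⟩, ⟨hτ0, hτT⟩⟩
  have hdd : dist ((t, τ) : ℝ × ℝ) ((τ, τ) : ℝ × ℝ) < η := by
    rw [Prod.dist_eq]
    simp only [dist_self]
    rw [max_eq_left dist_nonneg, Real.dist_eq, abs_of_nonneg (by linarith)]
    linarith
  have := hUC _ hmemK1 _ hmemK2 hdd
  rw [hzero, dist_zero_right, hident, Real.norm_eq_abs] at this
  exact le_of_lt (lt_of_le_of_lt (le_abs_self _) this)

end SpikeAux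

/-- spike-variation set lemma, nonsingular version: for a Banach-space-valued
kernel `φ` on `Δ`, dominated by an integrable `φ̄` and continuous in its first variable, and any
`δ ∈ (0,1)`, there is a measurable `E_δ ⊆ [0,T]` of measure `δT` with
`sup_{t∈[0,T]} ‖∫₀ᵗ ((1/δ)1_{E_δ}(s) − 1) φ(t,s) ds‖ ≤ δ`. -/
theorem spike_variation_nonsingular
    (X : Type*) [NormedAddCommGroup X] [NormedSpace ℝ X] [CompleteSpace X]
    (T : ℝ) (hT : 0 < T)
    (φ : ℝ → ℝ → X) (φbar : ℝ → ℝ)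
    (hφ_meas : StronglyMeasurable (Function.uncurry φ))
    (hφbar_int : IntegrableOn φbar (Set.Icc 0 T))
    (hbound : ∀ t s : ℝ, 0 ≤ s → s ≤ t → t ≤ T → ‖φ t s‖ ≤ φbar s)
    (hcont : ∀ᵐ s ∂(volume.restrict (Set.Icc 0 T)),
      ContinuousOn (fun t => φ t s) (Set.Icc s T))
    (δ : ℝ) (hδ : δ ∈ Set.Ioo (0:ℝ) 1) :
    ∃ E : Set ℝ, MeasurableSet E ∧ E ⊆ Set.Icc 0 T ∧
      volume E = ENNReal.ofReal (δ * T) ∧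
      ∀ t ∈ Set.Icc (0:ℝ) T,
        ‖∫ s in Set.Ioc 0 t, ((1 / δ) * Set.indicator E (fun _ => (1:ℝ)) s - 1) • φ t s‖ ≤ δ := by
  obtain ⟨hδ0, hδlt1⟩ := hδ
  have hδ1 : δ ≤ 1 := le_of_lt hδlt1
  have hφbar0 : ∀ s ∈ Icc (0:ℝ) T, 0 ≤ φbar s := fun s hs =>
    le_trans (norm_nonneg _) (hbound s s hs.1 le_rfl hs.2)
  set ε₂ : ℝ := δ * δ / 16 with hε₂
  have hε₂pos : 0 < ε₂ := by positivity
  obtain ⟨η₁, hη₁, hU1⟩ := SpikeAux.U1 hT hφbar_int hφbar0 hε₂pos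
  obtain ⟨η₂, hη₂, hU2⟩ := SpikeAux.U2 (X := X) hT hφ_meas hφbar_int hbound hcont hε₂pos
  set η := min η₁ η₂ with hηdef
  have hηpos : 0 < η := lt_min hη₁ hη₂
  obtain ⟨m₀, hm₀⟩ := exists_nat_gt (T / η)
  set m : ℕ := m₀ + 1 with hm
  have hm1 : 0 < m := Nat.succ_pos _
  have hTmpos : 0 < T / m := by positivity
  have hTm : T / m < η := by
    rw [div_lt_iff₀ (by exact_mod_cast hm1 : (0:ℝ) < m)]
    have h1 : T / η < m := lt_of_lt_of_le hm₀ (by exact_mod_cast Nat.le_succ m₀)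
    rw [div_lt_iff₀ hηpos] at h1
    linarith
  set τf : ℕ → ℝ := fun i => (i : ℝ) * (T / m) with hτf
  have hτmem : ∀ i : ℕ, i ≤ m → τf i ∈ Icc (0:ℝ) T := by
    intro i hi
    refine ⟨by positivity, ?_⟩
    calc (i:ℝ) * (T/m) ≤ (m:ℝ) * (T/m) :=
          mul_le_mul_of_nonneg_right (by exact_mod_cast hi) (by positivity)
      _ = T := by field_simp
  have hslice_sm : ∀ t : ℝ, StronglyMeasurable (fun s => φ t s) := fun t =>
    hφ_meas.comp_measurable measurable_prodMk_left
  have hsliceInt : ∀ t ∈ Icc (0:ℝ) T, IntegrableOn (fun s => φ t s) (Ioc 0 t) := by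
    intro t ht
    apply Integrable.mono' (hφbar_int.mono_set
      (show Ioc (0:ℝ) t ⊆ Icc 0 T from fun s hs => ⟨le_of_lt hs.1, le_trans hs.2 ht.2⟩))
    · exact (hslice_sm t).aestronglyMeasurable
    · rw [ae_restrict_iff' measurableSet_Ioc]
      exact Eventually.of_forall fun s hs => hbound t s (le_of_lt hs.1) hs.2 ht.2
  set ψ : ℕ → ℝ → X := fun i => indicator (Ioc 0 (τf i)) (fun s => φ (τf i) s) with hψ
  have hψint : ∀ i : ℕ, i ≤ m → Integrable (ψ i) := fun i hi =>
    (hsliceInt (τf i) (hτmem i hi)).integrable_indicator measurableSet_Ioc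
  have hpt : ∀ i : ℕ, ∃ Ni : ℕ, ∀ n ≥ Ni, i ≤ m →
      ‖∫ s, SpikeAux.Hfun T δ n s • ψ i s‖ < δ / 2 := by
    intro i
    by_cases hi : i ≤ m
    · have htd := SpikeAux.tendsto_Hfun_integral hT hδ0 hδ1 (hψint i hi)
      rw [Metric.tendsto_atTop] at htd
      obtain ⟨Ni, hNi⟩ := htd (δ/2) (by positivity)
      exact ⟨Ni, fun n hn _ => by simpa [dist_zero_right] using hNi n hn⟩
    · exact ⟨0, fun n _ hi' => absurd hi' hi⟩
  choose Nf hNf using hpt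
  set N : ℕ := max 1 ((Finset.range (m+1)).sup Nf) with hNdef
  set E : Set ℝ := SpikeAux.spikeSet T δ N with hE
  have hN1 : 0 < N := lt_of_lt_of_le one_pos (le_max_left _ _)
  have hEsub : E ⊆ Icc (0:ℝ) T := SpikeAux.spikeSet_subset (le_of_lt hT) hδ1 N
  refine ⟨E, SpikeAux.spikeSet_measurable T δ N, hEsub,
    SpikeAux.spikeSet_volume (le_of_lt hT) (le_of_lt hδ0) hδ1 hN1, ?_⟩
  intro t ht
  -- the multiplier and its bounds
  have habs : ∀ s : ℝ, |1 / δ * indicator E (fun _ => (1:ℝ)) s - 1| ≤ 1/δ + 1 := by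
    intro s
    have h1 : |1 / δ * indicator E (fun _ => (1:ℝ)) s| ≤ 1/δ := by
      by_cases hs : s ∈ E
      · rw [indicator_of_mem hs, mul_one, abs_of_pos (by positivity)]
      · rw [indicator_of_notMem hs, mul_zero, abs_zero]
        positivity
    calc |1 / δ * indicator E (fun _ => (1:ℝ)) s - 1|
        ≤ |1 / δ * indicator E (fun _ => (1:ℝ)) s| + |(1:ℝ)| := abs_sub _ _
      _ ≤ 1/δ + 1 := by rw [abs_one]; linarith
  have hmeas_h : Measurable (fun s : ℝ => 1 / δ * indicator E (fun _ => (1:ℝ)) s - 1) :=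
    (measurable_const.mul (measurable_const.indicator
      (SpikeAux.spikeSet_measurable T δ N))).sub measurable_const
  have hIntOn : ∀ u ∈ Icc (0:ℝ) T, ∀ S : Set ℝ, MeasurableSet S → S ⊆ Ioc 0 u →
      IntegrableOn (fun s => (1 / δ * indicator E (fun _ => (1:ℝ)) s - 1) • φ u s) S := by
    intro u hu S hSm hSsub
    have hSsub' : S ⊆ Icc (0:ℝ) T := fun s hs =>
      ⟨le_of_lt (hSsub hs).1, le_trans (hSsub hs).2 hu.2⟩
    apply Integrable.mono' ((hφbar_int.mono_set hSsub').const_mul (1/δ + 1))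
    · exact (hmeas_h.stronglyMeasurable.smul (hslice_sm u)).aestronglyMeasurable
    · rw [ae_restrict_iff' hSm]
      refine Eventually.of_forall fun s hs => ?_
      rw [norm_smul, Real.norm_eq_abs]
      exact mul_le_mul (habs s) (hbound u s (le_of_lt (hSsub hs).1) (hSsub hs).2 hu.2)
        (norm_nonneg _) (by positivity)
  -- net point below t
  set i : ℕ := ⌊t / (T/m)⌋₊ with hidef
  have him : i ≤ m := by
    have h1 : (i:ℝ) ≤ t / (T/m) := Nat.floor_le (div_nonneg ht.1 (le_of_lt hTmpos))
    have h2 : t / (T/m) ≤ (m:ℝ) := by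
      rw [div_le_iff₀ hTmpos]
      calc t ≤ T := ht.2
        _ = (m:ℝ) * (T/m) := by field_simp
    exact_mod_cast le_trans h1 h2
  set τ : ℝ := τf i with hτdef
  have hτ0 : 0 ≤ τ := (hτmem i him).1
  have hτT : τ ≤ T := (hτmem i him).2
  have hτt : τ ≤ t := by
    rw [hτdef, hτf]
    dsimp only
    rw [← le_div_iff₀ hTmpos]
    exact Nat.floor_le (div_nonneg ht.1 (le_of_lt hTmpos))
  have htτ : t - τ ≤ η := by
    have h1 : t / (T/m) < (i:ℝ) + 1 := Nat.lt_floor_add_one _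
    rw [div_lt_iff₀ hTmpos] at h1
    have h2 : t - τ < T/m := by
      rw [hτdef, hτf]
      dsimp only
      linarith
    linarith
  -- split the integral
  have hI1 := hIntOn t ht (Ioc 0 τ) measurableSet_Ioc (Ioc_subset_Ioc le_rfl hτt)
  have hI2 := hIntOn t ht (Ioc τ t) measurableSet_Ioc
    (fun s hs => ⟨lt_of_le_of_lt hτ0 hs.1, hs.2⟩)
  have hI3 := hIntOn τ ⟨hτ0, hτT⟩ (Ioc 0 τ) measurableSet_Ioc subset_rfl
  have hI4 : IntegrableOn
      (fun s => (1 / δ * indicator E (fun _ => (1:ℝ)) s - 1) • (φ t s - φ τ s)) (Ioc 0 τ) := by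
    have := hI1.sub hI3
    simpa [smul_sub, Pi.sub_def] using this
  have hsplit : ∫ s in Ioc 0 t, (1 / δ * indicator E (fun _ => (1:ℝ)) s - 1) • φ t s
      = (∫ s in Ioc 0 τ, (1 / δ * indicator E (fun _ => (1:ℝ)) s - 1) • φ t s)
        + ∫ s in Ioc τ t, (1 / δ * indicator E (fun _ => (1:ℝ)) s - 1) • φ t s := by
    rw [← Ioc_union_Ioc_eq_Ioc hτ0 hτt,
      setIntegral_union (Ioc_disjoint_Ioc_of_le le_rfl) measurableSet_Ioc hI1 hI2]
  have hdecomp : ∫ s in Ioc 0 τ, (1 / δ * indicator E (fun _ => (1:ℝ)) s - 1) • φ t s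
      = (∫ s in Ioc 0 τ, (1 / δ * indicator E (fun _ => (1:ℝ)) s - 1) • φ τ s)
        + ∫ s in Ioc 0 τ, (1 / δ * indicator E (fun _ => (1:ℝ)) s - 1) • (φ t s - φ τ s) := by
    rw [← integral_add hI3 hI4]
    refine integral_congr_ae (Eventually.of_forall fun s => ?_)
    dsimp only
    rw [smul_sub]
    abel
  -- Term: net point integral equals the spike integral of ψ i
  have hidE : ∫ s in Ioc 0 τ, (1 / δ * indicator E (fun _ => (1:ℝ)) s - 1) • φ τ s
      = ∫ s, SpikeAux.Hfun T δ N s • ψ i s := by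
    have e1 : (fun s => SpikeAux.Hfun T δ N s • ψ i s)
        = indicator (Ioc 0 τ) (fun s => SpikeAux.Hfun T δ N s • φ τ s) := by
      funext s
      rw [hψ]
      dsimp only
      by_cases hs : s ∈ Ioc 0 τ
      · rw [hτdef] at hs
        rw [indicator_of_mem hs, indicator_of_mem hs]
      · rw [hτdef] at hs
        rw [indicator_of_notMem hs, indicator_of_notMem hs, smul_zero]
    rw [e1, integral_indicator measurableSet_Ioc]
    refine (setIntegral_congr_fun measurableSet_Ioc fun s hs => ?_).symm
    have hsIcc : s ∈ Icc (0:ℝ) T := ⟨le_of_lt hs.1, le_trans hs.2 hτT⟩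
    simp only [SpikeAux.Hfun, ← hE, indicator_of_mem hsIcc]
  have hNge : Nf i ≤ N := le_trans
    (Finset.le_sup (Finset.mem_range.mpr (Nat.lt_succ_of_le him))) (le_max_right _ _)
  have hterm1 : ‖∫ s in Ioc 0 τ, (1 / δ * indicator E (fun _ => (1:ℝ)) s - 1) • φ τ s‖
      < δ / 2 := by
    rw [hidE]
    exact hNf i N hNge him
  -- Term: equicontinuity bound
  have hterm2 : ‖∫ s in Ioc 0 τ,
      (1 / δ * indicator E (fun _ => (1:ℝ)) s - 1) • (φ t s - φ τ s)‖ ≤ (1/δ + 1) * ε₂ := by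
    have hnormint : IntegrableOn (fun s => (1/δ + 1) * ‖φ t s - φ τ s‖) (Ioc 0 τ) := by
      have hdiff : IntegrableOn (fun s => φ t s - φ τ s) (Ioc 0 τ) :=
        ((hsliceInt t ht).mono_set (Ioc_subset_Ioc le_rfl hτt)).sub (hsliceInt τ ⟨hτ0, hτT⟩)
      exact hdiff.norm.const_mul _
    have hb : ‖∫ s in Ioc 0 τ, (1 / δ * indicator E (fun _ => (1:ℝ)) s - 1) • (φ t s - φ τ s)‖
        ≤ ∫ s in Ioc 0 τ, (1/δ + 1) * ‖φ t s - φ τ s‖ := by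
      refine norm_integral_le_of_norm_le hnormint (Eventually.of_forall fun s => ?_)
      rw [norm_smul, Real.norm_eq_abs]
      exact mul_le_mul_of_nonneg_right (habs s) (norm_nonneg _)
    refine le_trans hb ?_
    rw [integral_const_mul]
    exact mul_le_mul_of_nonneg_left
      (hU2 τ t hτ0 hτt ht.2 (le_trans htτ (min_le_right _ _))) (by positivity)
  -- Term: small interval bound
  have hterm3 : ‖∫ s in Ioc τ t,
      (1 / δ * indicator E (fun _ => (1:ℝ)) s - 1) • φ t s‖ ≤ (1/δ + 1) * ε₂ := by
    have hnormint : IntegrableOn (fun s => (1/δ + 1) * φbar s) (Ioc τ t) :=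
      (hφbar_int.mono_set (fun s hs =>
        ⟨le_trans hτ0 (le_of_lt hs.1), le_trans hs.2 ht.2⟩)).const_mul _
    have hb : ‖∫ s in Ioc τ t, (1 / δ * indicator E (fun _ => (1:ℝ)) s - 1) • φ t s‖
        ≤ ∫ s in Ioc τ t, (1/δ + 1) * φbar s := by
      refine norm_integral_le_of_norm_le hnormint ?_
      rw [ae_restrict_iff' measurableSet_Ioc]
      refine Eventually.of_forall fun s hs => ?_
      rw [norm_smul, Real.norm_eq_abs]
      exact mul_le_mul (habs s)
        (hbound t s (le_of_lt (lt_of_le_of_lt hτ0 hs.1)) hs.2 ht.2)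
        (norm_nonneg _) (by positivity)
    refine le_trans hb ?_
    rw [integral_const_mul]
    exact mul_le_mul_of_nonneg_left
      (hU1 τ t hτ0 hτt ht.2 (le_trans htτ (min_le_left _ _))) (by positivity)
  -- combine everything
  have hfinal : (1/δ + 1) * ε₂ ≤ δ / 4 := by
    rw [hε₂]
    have e : (1/δ + 1) * (δ * δ / 16) = (δ + δ * δ) / 16 := by field_simp
    rw [e]
    nlinarith
  rw [hsplit, hdecomp]
  refine le_trans norm_add₃_le ?_
  linarith [hterm1, hterm2, hterm3, hfinal]
end
end
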